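/- For the softmax function s on ℝ^K, the sum of the Euclidean norms of the coordinate gradients is bounded: Σ_{k=1}^K ‖∇s_k(o)‖_2 ≤ 2 for all o ∈ ℝ^K. -/
import Mathlib


open scoped BigOperators

/-- The softmax function `s : ℝ^K → Δ^K`. -/
noncomputable def softmax {K : ℕ} (o : Fin K → ℝ) (k : Fin K) : ℝ :=
  Real.exp (o k) / ∑ j, Real.exp (o j)

lemma sqrt_sum_sq_le_sum_abs {ι : Type*} (t : Finset ι) (f : ι → ℝ) :
    Real.sqrt (∑ i ∈ t, f i ^ 2) ≤ ∑ i ∈ t, |f i| := by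
  have h1 : ∑ i ∈ t, f i ^ 2 ≤ (∑ i ∈ t, |f i|) ^ 2 := by
    calc ∑ i ∈ t, f i ^ 2 = ∑ i ∈ t, |f i| ^ 2 := by simp [sq_abs]
      _ ≤ (∑ i ∈ t, |f i|) ^ 2 :=
        Finset.sum_sq_le_sq_sum_of_nonneg (fun i _ => abs_nonneg _)
  calc Real.sqrt (∑ i ∈ t, f i ^ 2) ≤ Real.sqrt ((∑ i ∈ t, |f i|) ^ 2) :=
        Real.sqrt_le_sqrt h1
    _ = ∑ i ∈ t, |f i| := Real.sqrt_sq (Finset.sum_nonneg fun i _ => abs_nonneg _)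

/-- The sum over coordinates of the Euclidean norms of the softmax
coordinate gradients is at most 2. -/
theorem softmax_sum_grad_norms_le_two {K : ℕ} (hK : 0 < K) (o : Fin K → ℝ) :
    ∑ k : Fin K, Real.sqrt (∑ j, ((if k = j then (1 : ℝ) else 0) * softmax o k
        - softmax o k * softmax o j) ^ 2) ≤ 2 := by
  have hne : Nonempty (Fin K) := ⟨⟨0, hK⟩⟩
  set s := softmax o with hsdef
  have hS : 0 < ∑ j, Real.exp (o j) :=
    Finset.sum_pos (fun j _ => Real.exp_pos _) Finset.univ_nonempty
  have hs0 : ∀ j, 0 ≤ s j := fun j => div_nonneg (Real.exp_pos _).le hS.le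
  have hs1 : ∀ j, s j ≤ 1 := fun j =>
    div_le_one_of_le₀
      (Finset.single_le_sum (fun i _ => (Real.exp_pos (o i)).le) (Finset.mem_univ j)) hS.le
  have hsum : ∑ j, s j = 1 := by
    simp only [hsdef, softmax, ← Finset.sum_div]
    exact div_self hS.ne'
  have habs : ∀ k, ∑ j, |(if k = j then (1 : ℝ) else 0) - s j| = 2 - 2 * s k := by
    intro k
    have : ∀ j, |(if k = j then (1 : ℝ) else 0) - s j|
        = (if k = j then 1 - 2 * s j else 0) + s j := by
      intro j
      by_cases h : k = j <;> simp [h, abs_of_nonneg, abs_of_nonpos, hs0 j, hs1 j,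
        abs_of_nonneg (sub_nonneg.2 (hs1 j))] <;> ring
    rw [Finset.sum_congr rfl (fun j _ => this j), Finset.sum_add_distrib,
      Finset.sum_ite_eq, hsum]
    simp
    ring
  calc ∑ k : Fin K, Real.sqrt (∑ j, ((if k = j then (1 : ℝ) else 0) * s k
          - s k * s j) ^ 2)
      ≤ ∑ k : Fin K, ∑ j, |(if k = j then (1 : ℝ) else 0) * s k - s k * s j| :=
        Finset.sum_le_sum fun k _ => sqrt_sum_sq_le_sum_abs _ _
    _ = ∑ k : Fin K, s k * (2 - 2 * s k) := by
        refine Finset.sum_congr rfl fun k _ => ?_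
        rw [← habs k, Finset.mul_sum]
        refine Finset.sum_congr rfl fun j _ => ?_
        rw [show (if k = j then (1:ℝ) else 0) * s k - s k * s j
          = s k * ((if k = j then (1:ℝ) else 0) - s j) by ring, abs_mul,
          abs_of_nonneg (hs0 k)]
    _ ≤ ∑ k : Fin K, s k * 2 := by
        refine Finset.sum_le_sum fun k _ => ?_
        have := hs0 k
        nlinarith
    _ = 2 := by rw [← Finset.sum_mul, hsum, one_mul]
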